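/- For any integers r ≥ 2^{2l}−1 and m ≥ 2^{2l+1}−1 (with l ≥ 1), there exist sets A, B ⊆ ℕ with R_A = R_B, infinite symmetric difference, and A ∩ B equal to the infinite arithmetic progression r + m·ℕ. -/

import Mathlib

/-- Representation function: number of unordered representations of `n`
as `s' + s''` with `s' < s''`, both in `S`. -/
noncomputable def R (S : Set ℕ) (n : ℕ) : ℕ :=
  {p : ℕ × ℕ | p.1 ∈ S ∧ p.2 ∈ S ∧ p.1 < p.2 ∧ p.1 + p.2 = n}.ncard

/-- Translate of a set: `m + S`. -/
def tr (m : ℕ) (S : Set ℕ) : Set ℕ := (m + ·) '' S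

namespace S17

open Finset

/-- Digit weights: `2^i` for `i < 2l`, then `2^(2l) - 1`, then `m·2^(i-(2l+1))`. -/
def W (l m i : ℕ) : ℕ :=
  if i < 2*l then 2^i else if i = 2*l then 2^(2*l) - 1 else m * 2^(i - (2*l+1))

/-- Value of a digit set. -/
def val (l m : ℕ) (F : Finset ℕ) : ℕ := ∑ i ∈ F, W l m i

def loF (l : ℕ) (F : Finset ℕ) : Finset ℕ := F.filter (fun i => i < 2*l)
def hiF (l : ℕ) (F : Finset ℕ) : Finset ℕ := F.filter (fun i => 2*l < i)
def hiV (l : ℕ) (F : Finset ℕ) : ℕ := ∑ i ∈ hiF l F, 2^(i - (2*l+1))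

lemma val_decomp (l m : ℕ) (F : Finset ℕ) :
    val l m F = (∑ i ∈ loF l F, 2^i) + (if 2*l ∈ F then 2^(2*l) - 1 else 0)
      + m * hiV l F := by
  classical
  have h1 : ∀ i : ℕ, W l m i = (if i < 2*l then 2^i else 0)
      + (if 2*l = i then 2^(2*l) - 1 else 0)
      + (if 2*l < i then m * 2^(i - (2*l+1)) else 0) := by
    intro i
    rcases lt_trichotomy i (2*l) with h | h | h
    · rw [W, if_pos h, if_pos h, if_neg (by omega), if_neg (by omega)]
      omega
    · rw [W, if_neg (by omega), if_pos (by omega), if_neg (by omega),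
        if_pos (by omega), if_neg (by omega)]
      omega
    · rw [W, if_neg (by omega), if_neg (by omega), if_neg (by omega),
        if_neg (by omega), if_pos h]
      simp
  rw [val, Finset.sum_congr rfl (fun i _ => h1 i)]
  rw [Finset.sum_add_distrib, Finset.sum_add_distrib]
  congr 1
  · congr 1
    · rw [loF, Finset.sum_filter]
    · rw [Finset.sum_ite_eq]
  · rw [hiV, hiF, Finset.sum_filter, Finset.mul_sum, Finset.sum_congr rfl]
    intro i _
    split <;> simp

lemma card_decomp (l : ℕ) (F : Finset ℕ) :
    F.card = (loF l F).card + (if 2*l ∈ F then 1 else 0) + (hiF l F).card := by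
  classical
  have h1 : ∀ i : ℕ, (1:ℕ) = (if i < 2*l then 1 else 0)
      + (if 2*l = i then 1 else 0) + (if 2*l < i then 1 else 0) := by
    intro i
    rcases lt_trichotomy i (2*l) with h | h | h
    · rw [if_pos h, if_neg (by omega), if_neg (by omega)]
    · rw [if_neg (by omega), if_pos (by omega), if_neg (by omega)]
    · rw [if_neg (by omega), if_neg (by omega), if_pos h]
  rw [Finset.card_eq_sum_ones, Finset.sum_congr rfl (fun i _ => h1 i),
    Finset.sum_add_distrib, Finset.sum_add_distrib]
  congr 1
  · congr 1
    · rw [loF, Finset.card_eq_sum_ones, Finset.sum_filter]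
    · rw [Finset.sum_ite_eq]
  · rw [hiF, Finset.card_eq_sum_ones, Finset.sum_filter]

lemma sum_range_two_pow (n : ℕ) : ∑ i ∈ Finset.range n, 2^i = 2^n - 1 := by
  induction n with
  | zero => simp
  | succ n ih =>
    have h2 : 1 ≤ 2^n := Nat.one_le_two_pow
    rw [Finset.sum_range_succ, ih, pow_succ]
    omega

lemma lo_le (l : ℕ) (F : Finset ℕ) : ∑ i ∈ loF l F, 2^i ≤ 2^(2*l) - 1 := by
  calc ∑ i ∈ loF l F, 2^i ≤ ∑ i ∈ Finset.range (2*l), 2^i := by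
        apply Finset.sum_le_sum_of_subset
        intro i hi
        simp only [loF, Finset.mem_filter] at hi
        simpa using hi.2
    _ = 2^(2*l) - 1 := sum_range_two_pow _

lemma ee_inj : Function.Injective (fun s : Finset ℕ => ∑ i ∈ s, 2 ^ i) :=
  Finset.geomSum_injective le_rfl

lemma hiF_eq_of_hiV_eq (l : ℕ) {F G : Finset ℕ} (h : hiV l F = hiV l G) :
    hiF l F = hiF l G := by
  classical
  have hmem : ∀ (H : Finset ℕ), ∀ i ∈ hiF l H, 2*l+1 ≤ i := by
    intro H i hi
    simp only [hiF, Finset.mem_filter] at hi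
    omega
  have hsum : ∀ H : Finset ℕ, (∑ i ∈ (hiF l H).image (fun i => i - (2*l+1)), 2^i) = hiV l H := by
    intro H
    rw [Finset.sum_image]
    · rfl
    · intro a ha b hb hab
      have ha' := hmem H a ha
      have hb' := hmem H b hb
      simp only [id_eq] at hab
      omega
  have himg : (hiF l F).image (fun i => i - (2*l+1)) = (hiF l G).image (fun i => i - (2*l+1)) := by
    apply ee_inj
    simp only
    rw [hsum, hsum, h]
  have hback : ∀ H : Finset ℕ, ((hiF l H).image (fun i => i - (2*l+1))).image
      (fun i => i + (2*l+1)) = hiF l H := by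
    intro H
    rw [Finset.image_image]
    refine (Finset.image_congr ?_).trans Finset.image_id
    intro a ha
    have h2 := hmem H a ha
    simp only [Function.comp_apply, id_eq]
    omega
  rw [← hback F, ← hback G, himg]

lemma ext_of_parts (l : ℕ) {F G : Finset ℕ} (hlo : loF l F = loF l G)
    (hmid : (2*l ∈ F) ↔ (2*l ∈ G)) (hhi : hiF l F = hiF l G) : F = G := by
  classical
  ext i
  rcases lt_trichotomy i (2*l) with h | h | h
  · have e1 : i ∈ F ↔ i ∈ loF l F := by simp [loF, Finset.mem_filter, h]
    have e2 : i ∈ G ↔ i ∈ loF l G := by simp [loF, Finset.mem_filter, h]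
    rw [e1, e2, hlo]
  · subst h; exact hmid
  · have e1 : i ∈ F ↔ i ∈ hiF l F := by simp [hiF, Finset.mem_filter, h]
    have e2 : i ∈ G ↔ i ∈ hiF l G := by simp [hiF, Finset.mem_filter, h]
    rw [e1, e2, hhi]

lemma pow_facts (l m : ℕ) (hl : 1 ≤ l) (hm : 2^(2*l+1) - 1 ≤ m) :
    4 ≤ 2^(2*l) ∧ 2^(2*l+1) = 2 * 2^(2*l) ∧ 2^(2*l) - 1 < m ∧ 0 < m := by
  have h1 : (4:ℕ) = 2^2 := by norm_num
  have h2 : (2:ℕ)^2 ≤ 2^(2*l) := Nat.pow_le_pow_right (by omega) (by omega)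
  have h3 : (2:ℕ)^(2*l+1) = 2 * 2^(2*l) := by rw [pow_succ]; ring
  omega

/-- Main uniqueness dichotomy for values of digit sets. -/
lemma dichotomy (l m : ℕ) (hl : 1 ≤ l) (hm : 2^(2*l+1) - 1 ≤ m)
    {F G : Finset ℕ} (h : val l m F = val l m G) :
    F = G ∨ (F.card % 2 ≠ G.card % 2 ∧ ∃ k, val l m F = (2^(2*l) - 1) + m * k) := by
  classical
  obtain ⟨hp4, hp2, hsm, hm0⟩ := pow_facts l m hl hm
  have hdF := val_decomp l m F
  have hdG := val_decomp l m G
  set aF := ∑ i ∈ loF l F, 2^i with haF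
  set aG := ∑ i ∈ loF l G, 2^i with haG
  have hlF := lo_le l F
  have hlG := lo_le l G
  have hcF : aF + (if 2*l ∈ F then 2^(2*l) - 1 else 0) < m := by split <;> omega
  have hcG : aG + (if 2*l ∈ G then 2^(2*l) - 1 else 0) < m := by split <;> omega
  -- separate the div/mod parts
  have hsep : aF + (if 2*l ∈ F then 2^(2*l) - 1 else 0)
      = aG + (if 2*l ∈ G then 2^(2*l) - 1 else 0) ∧ hiV l F = hiV l G := by
    have hmod : (aF + (if 2*l ∈ F then 2^(2*l) - 1 else 0) + m * hiV l F) % m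
        = (aG + (if 2*l ∈ G then 2^(2*l) - 1 else 0) + m * hiV l G) % m := by
      rw [← hdF, ← hdG, h]
    rw [Nat.add_mul_mod_self_left, Nat.add_mul_mod_self_left,
      Nat.mod_eq_of_lt hcF, Nat.mod_eq_of_lt hcG] at hmod
    refine ⟨hmod, ?_⟩
    have := h
    rw [hdF, hdG, hmod] at this
    have h2 := Nat.add_left_cancel this
    exact Nat.eq_of_mul_eq_mul_left hm0 h2
  obtain ⟨hc, hh⟩ := hsep
  have hhiF : hiF l F = hiF l G := hiF_eq_of_hiV_eq l hh
  by_cases hF2 : 2*l ∈ F <;> by_cases hG2 : 2*l ∈ G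
  · left
    rw [if_pos hF2, if_pos hG2] at hc
    have : aF = aG := by omega
    exact ext_of_parts l (ee_inj this) (by simp [hF2, hG2]) hhiF
  · -- mixed case : 2*l ∈ F, 2*l ∉ G
    right
    rw [if_pos hF2, if_neg hG2] at hc
    have haF0 : aF = 0 := by omega
    have haGs : aG = 2^(2*l) - 1 := by omega
    have hloF : loF l F = ∅ := by
      refine ee_inj ?_
      show aF = ∑ i ∈ (∅ : Finset ℕ), 2^i
      simpa using haF0
    have hloG : loF l G = Finset.range (2*l) := by
      apply ee_inj
      simp only
      rw [← haG, haGs, sum_range_two_pow]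
    have hcF' := card_decomp l F
    have hcG' := card_decomp l G
    rw [hloF, if_pos hF2] at hcF'
    rw [hloG, if_neg hG2] at hcG'
    simp only [Finset.card_empty, Finset.card_range] at hcF' hcG'
    constructor
    · rw [hhiF] at hcF'
      omega
    · exact ⟨hiV l F, by rw [hdF, haF0, if_pos hF2]; omega⟩
  · -- mixed case : 2*l ∉ F, 2*l ∈ G
    right
    rw [if_neg hF2, if_pos hG2] at hc
    have haG0 : aG = 0 := by omega
    have haFs : aF = 2^(2*l) - 1 := by omega
    have hloG : loF l G = ∅ := by
      refine ee_inj ?_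
      show aG = ∑ i ∈ (∅ : Finset ℕ), 2^i
      simpa using haG0
    have hloF : loF l F = Finset.range (2*l) := by
      apply ee_inj
      simp only
      rw [← haF, haFs, sum_range_two_pow]
    have hcF' := card_decomp l F
    have hcG' := card_decomp l G
    rw [hloF, if_neg hF2] at hcF'
    rw [hloG, if_pos hG2] at hcG'
    simp only [Finset.card_empty, Finset.card_range] at hcF' hcG'
    constructor
    · rw [hhiF] at hcF'
      omega
    · refine ⟨hiV l G, ?_⟩
      rw [h, hdG, haG0, if_pos hG2]
      omega
  · left
    rw [if_neg hF2, if_neg hG2] at hc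
    have : aF = aG := by omega
    exact ext_of_parts l (ee_inj this) (by simp [hF2, hG2]) hhiF

lemma val_inj_parity (l m : ℕ) (hl : 1 ≤ l) (hm : 2^(2*l+1) - 1 ≤ m)
    {F G : Finset ℕ} (h : val l m F = val l m G) (hpar : F.card % 2 = G.card % 2) :
    F = G := by
  rcases dichotomy l m hl hm h with h1 | ⟨h1, -⟩
  · exact h1
  · omega

/-- High digit set representing `m*k`. -/
def up (l k : ℕ) : Finset ℕ := (Nat.bitIndices k).toFinset.image (fun i => i + (2*l+1))

lemma mem_up_gt {l k i : ℕ} (h : i ∈ up l k) : 2*l < i := by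
  simp only [up, Finset.mem_image] at h
  obtain ⟨a, -, rfl⟩ := h
  omega

lemma val_up (l m k : ℕ) : val l m (up l k) = m * k := by
  classical
  rw [val, up, Finset.sum_image (by intro a _ b _ hab; simp only at hab; omega)]
  have h1 : ∀ i ∈ (Nat.bitIndices k).toFinset, W l m (i + (2*l+1)) = m * 2^i := by
    intro i _
    rw [W, if_neg (by omega), if_neg (by omega)]
    have h2 : i + (2*l+1) - (2*l+1) = i := by omega
    rw [h2]
  rw [Finset.sum_congr rfl h1, ← Finset.mul_sum, Finset.twoPowSum_toFinset_bitIndices]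

lemma val_insert_up (l m k : ℕ) :
    val l m (insert (2*l) (up l k)) = (2^(2*l) - 1) + m * k := by
  classical
  have hni : 2*l ∉ up l k := fun h => absurd (mem_up_gt h) (by omega)
  rw [val, Finset.sum_insert hni, W, if_neg (by omega), if_pos rfl]
  rw [← val, val_up]

lemma card_insert_up (l k : ℕ) :
    (insert (2*l) (up l k)).card = 1 + (up l k).card := by
  classical
  have hni : 2*l ∉ up l k := fun h => absurd (mem_up_gt h) (by omega)
  rw [Finset.card_insert_of_notMem hni]
  omega

lemma disj_range_up (l k : ℕ) : Disjoint (Finset.range (2*l)) (up l k) := by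
  classical
  rw [Finset.disjoint_left]
  intro i hi hup
  have := mem_up_gt hup
  simp only [Finset.mem_range] at hi
  omega

lemma val_range_union_up (l m k : ℕ) :
    val l m (Finset.range (2*l) ∪ up l k) = (2^(2*l) - 1) + m * k := by
  classical
  rw [val, Finset.sum_union (disj_range_up l k)]
  have h1 : ∀ i ∈ Finset.range (2*l), W l m i = 2^i := by
    intro i hi
    simp only [Finset.mem_range] at hi
    rw [W, if_pos hi]
  rw [Finset.sum_congr rfl h1, sum_range_two_pow, ← val, val_up]

lemma card_range_union_up (l k : ℕ) :
    (Finset.range (2*l) ∪ up l k).card = 2*l + (up l k).card := by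
  classical
  rw [Finset.card_union_of_disjoint (disj_range_up l k), Finset.card_range]

/-- The base sets: numbers representable with even (`ε = 0`) resp. odd (`ε = 1`)
number of digits. -/
def S0 (l m ε : ℕ) : Set ℕ := {x | ∃ F : Finset ℕ, F.card % 2 = ε ∧ val l m F = x}

/-- Both parities represent `(2^(2l) - 1) + m*k`. -/
lemma rep_both (l m k ε : ℕ) (hε : ε < 2) : (2^(2*l) - 1) + m * k ∈ S0 l m ε := by
  by_cases h : (1 + (up l k).card) % 2 = ε
  · exact ⟨insert (2*l) (up l k), by rw [card_insert_up]; exact h, val_insert_up l m k⟩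
  · refine ⟨Finset.range (2*l) ∪ up l k, ?_, val_range_union_up l m k⟩
    rw [card_range_union_up]
    omega

/-- toggle of a digit. -/
def tg (j : ℕ) (F : Finset ℕ) : Finset ℕ :=
  if j ∈ F then F.erase j else insert j F

lemma tg_tg (j : ℕ) (F : Finset ℕ) : tg j (tg j F) = F := by
  classical
  by_cases h : j ∈ F
  · have h1 : tg j F = F.erase j := by rw [tg, if_pos h]
    rw [h1, tg, if_neg (Finset.notMem_erase j F), Finset.insert_erase h]
  · have h1 : tg j F = insert j F := by rw [tg, if_neg h]
    rw [h1, tg, if_pos (Finset.mem_insert_self j F), Finset.erase_insert h]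

lemma mem_tg_self (j : ℕ) (F : Finset ℕ) : j ∈ tg j F ↔ j ∉ F := by
  classical
  by_cases h : j ∈ F <;> simp [tg, h]

lemma mem_tg_ne {i j : ℕ} (hij : i ≠ j) (F : Finset ℕ) : i ∈ tg j F ↔ i ∈ F := by
  classical
  by_cases h : j ∈ F <;> simp [tg, h, hij, Ne.symm hij]

lemma card_tg_parity (j : ℕ) (F : Finset ℕ) : (tg j F).card % 2 + F.card % 2 = 1 := by
  classical
  by_cases h : j ∈ F
  · rw [tg, if_pos h, Finset.card_erase_of_mem h]
    have : 1 ≤ F.card := Finset.card_pos.mpr ⟨j, h⟩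
    omega
  · rw [tg, if_neg h, Finset.card_insert_of_notMem h]
    omega

lemma val_tg_mem (l m j : ℕ) {F : Finset ℕ} (h : j ∈ F) :
    val l m F = W l m j + val l m (tg j F) := by
  classical
  rw [tg, if_pos h, val, val, ← Finset.add_sum_erase _ _ h]

lemma val_tg_not_mem (l m j : ℕ) {F : Finset ℕ} (h : j ∉ F) :
    val l m (tg j F) = W l m j + val l m F := by
  classical
  rw [tg, if_neg h, val, val, Finset.sum_insert h]

/-- The difference set of a pair. -/
def dd (F G : Finset ℕ) : Finset ℕ := (F \ G) ∪ (G \ F)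

lemma mem_dd {F G : Finset ℕ} {i : ℕ} : i ∈ dd F G ↔ ¬ (i ∈ F ↔ i ∈ G) := by
  classical
  simp only [dd, Finset.mem_union, Finset.mem_sdiff]
  tauto

lemma dd_nonempty {F G : Finset ℕ} (h : F ≠ G) : (dd F G).Nonempty := by
  classical
  by_contra hne
  rw [Finset.not_nonempty_iff_eq_empty] at hne
  refine h (Finset.ext fun i => ?_)
  by_contra hi
  have : i ∈ dd F G := mem_dd.mpr (by tauto)
  rw [hne] at this
  exact absurd this (Finset.notMem_empty i)

lemma dd_comm (F G : Finset ℕ) : dd F G = dd G F := by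
  rw [dd, dd, Finset.union_comm]

lemma dd_tg (j : ℕ) (F G : Finset ℕ) : dd (tg j F) (tg j G) = dd F G := by
  classical
  ext i
  by_cases hij : i = j
  · subst hij
    rw [mem_dd, mem_dd, mem_tg_self, mem_tg_self]
    tauto
  · rw [mem_dd, mem_dd, mem_tg_ne hij, mem_tg_ne hij]

/-- The swapping involution on pairs of digit sets. -/
noncomputable def swapP (l m : ℕ) : Finset ℕ × Finset ℕ → Finset ℕ × Finset ℕ :=
  fun q =>
    if h : (dd q.1 q.2).Nonempty then
      let j := (dd q.1 q.2).min' h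
      if val l m (tg j q.1) ≤ val l m (tg j q.2) then (tg j q.1, tg j q.2)
      else (tg j q.2, tg j q.1)
    else q

/-- Rep-level pair sets. -/
def RP (l m ε u : ℕ) : Set (Finset ℕ × Finset ℕ) :=
  {q | q.1.card % 2 = ε ∧ q.2.card % 2 = ε ∧ val l m q.1 < val l m q.2
    ∧ val l m q.1 + val l m q.2 = u}

lemma min'_congr {s t : Finset ℕ} (h : s = t) (hs : s.Nonempty) (ht : t.Nonempty) :
    s.min' hs = t.min' ht := by subst h; rfl

lemma swapP_eq (l m : ℕ) {F G : Finset ℕ} (h : (dd F G).Nonempty) :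
    swapP l m (F, G) =
      if val l m (tg ((dd F G).min' h) F) ≤ val l m (tg ((dd F G).min' h) G)
      then (tg ((dd F G).min' h) F, tg ((dd F G).min' h) G)
      else (tg ((dd F G).min' h) G, tg ((dd F G).min' h) F) := by
  simp only [swapP]
  rw [dif_pos h]

lemma swap_mapsTo (l m : ℕ) (hl : 1 ≤ l) (hm : 2^(2*l+1) - 1 ≤ m)
    {ε ε' u : ℕ} (hε : ε < 2) (hε' : ε' = 1 - ε) :
    Set.MapsTo (swapP l m) (RP l m ε u) (RP l m ε' u) := by
  rintro ⟨F, G⟩ ⟨h1, h2, h3, h4⟩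
  dsimp only at h1 h2 h3 h4
  have hne : F ≠ G := fun e => absurd h3 (by rw [e]; exact lt_irrefl _)
  have hdd : (dd F G).Nonempty := dd_nonempty hne
  set j := (dd F G).min' hdd with hjdef
  have hjmem : j ∈ dd F G := (dd F G).min'_mem hdd
  have hp1 : (tg j F).card % 2 = ε' := by have := card_tg_parity j F; omega
  have hp2 : (tg j G).card % 2 = ε' := by have := card_tg_parity j G; omega
  have hvne : val l m (tg j F) ≠ val l m (tg j G) := by
    intro he
    have heq : tg j F = tg j G := val_inj_parity l m hl hm he (by rw [hp1, hp2])
    have hj1 : (j ∉ F) ↔ (j ∉ G) := by rw [← mem_tg_self j F, heq, mem_tg_self]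
    rw [mem_dd] at hjmem
    tauto
  have hsum : val l m (tg j F) + val l m (tg j G) = u := by
    rw [mem_dd] at hjmem
    by_cases hjF : j ∈ F
    · have hjG : j ∉ G := fun hg => hjmem (by tauto)
      have e1 := val_tg_mem l m j hjF
      have e2 := val_tg_not_mem l m j hjG
      omega
    · have hjG : j ∈ G := by tauto
      have e1 := val_tg_not_mem l m j hjF
      have e2 := val_tg_mem l m j hjG
      omega
  rw [RP, Set.mem_ofPred_eq, swapP_eq l m hdd, ← hjdef]
  by_cases hle : val l m (tg j F) ≤ val l m (tg j G)
  · rw [if_pos hle]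
    exact ⟨hp1, hp2, lt_of_le_of_ne hle hvne, hsum⟩
  · rw [if_neg hle]
    refine ⟨hp2, hp1, ?_, ?_⟩ <;> dsimp only <;> omega

lemma swap_swap (l m : ℕ) {F G : Finset ℕ} (hlt : val l m F < val l m G) :
    swapP l m (swapP l m (F, G)) = (F, G) := by
  have hne : F ≠ G := fun e => absurd hlt (by rw [e]; exact lt_irrefl _)
  have hdd : (dd F G).Nonempty := dd_nonempty hne
  set j := (dd F G).min' hdd with hjdef
  rw [swapP_eq l m hdd, ← hjdef]
  by_cases hle : val l m (tg j F) ≤ val l m (tg j G)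
  · rw [if_pos hle]
    have hdd2 : (dd (tg j F) (tg j G)).Nonempty := by rw [dd_tg]; exact hdd
    rw [swapP_eq l m hdd2]
    have hj2 : (dd (tg j F) (tg j G)).min' hdd2 = j :=
      min'_congr (dd_tg j F G) hdd2 hdd
    rw [hj2, tg_tg, tg_tg, if_pos hlt.le]
  · rw [if_neg hle]
    have hdd2 : (dd (tg j G) (tg j F)).Nonempty := by
      rw [dd_comm, dd_tg]; exact hdd
    rw [swapP_eq l m hdd2]
    have hj2 : (dd (tg j G) (tg j F)).min' hdd2 = j :=
      min'_congr (by rw [dd_comm, dd_tg]) hdd2 hdd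
    rw [hj2, tg_tg, tg_tg, if_neg (not_le.mpr hlt)]

lemma bijOn_swap (l m : ℕ) (hl : 1 ≤ l) (hm : 2^(2*l+1) - 1 ≤ m) (u : ℕ) :
    Set.BijOn (swapP l m) (RP l m 0 u) (RP l m 1 u) := by
  refine Set.InvOn.bijOn ⟨?_, ?_⟩
    (swap_mapsTo l m hl hm (by omega) (by omega))
    (swap_mapsTo l m hl hm (by omega) (by omega))
  · rintro ⟨F, G⟩ ⟨-, -, h3, -⟩
    exact swap_swap l m h3
  · rintro ⟨F, G⟩ ⟨-, -, h3, -⟩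
    exact swap_swap l m h3

/-- The pair set underlying `R`. -/
def pairSet (S : Set ℕ) (n : ℕ) : Set (ℕ × ℕ) :=
  {p | p.1 ∈ S ∧ p.2 ∈ S ∧ p.1 < p.2 ∧ p.1 + p.2 = n}

lemma R_eq (S : Set ℕ) (n : ℕ) : R S n = (pairSet S n).ncard := rfl

lemma pairSet_S0 (l m : ℕ) (ε u : ℕ) :
    pairSet (S0 l m ε) u
      = (fun q : Finset ℕ × Finset ℕ => (val l m q.1, val l m q.2)) '' RP l m ε u := by
  ext ⟨x, y⟩
  constructor
  · rintro ⟨⟨F, hF, rfl⟩, ⟨G, hG, rfl⟩, hlt, hsum⟩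
    exact ⟨(F, G), ⟨hF, hG, hlt, hsum⟩, rfl⟩
  · rintro ⟨⟨F, G⟩, ⟨hF, hG, hlt, hsum⟩, heq⟩
    dsimp only at heq hF hG hlt hsum
    rw [← heq]
    exact ⟨⟨F, hF, rfl⟩, ⟨G, hG, rfl⟩, hlt, hsum⟩

lemma injOn_val_pairs (l m : ℕ) (hl : 1 ≤ l) (hm : 2^(2*l+1) - 1 ≤ m) (ε u : ℕ) :
    Set.InjOn (fun q : Finset ℕ × Finset ℕ => (val l m q.1, val l m q.2))
      (RP l m ε u) := by
  rintro ⟨F, G⟩ ⟨hF, hG, -, -⟩ ⟨F', G'⟩ ⟨hF', hG', -, -⟩ heq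
  dsimp only at *
  rw [Prod.mk.injEq] at heq
  have e1 : F = F' := val_inj_parity l m hl hm heq.1 (by rw [hF, hF'])
  have e2 : G = G' := val_inj_parity l m hl hm heq.2 (by rw [hG, hG'])
  rw [e1, e2]

lemma R_S0_eq (l m : ℕ) (hl : 1 ≤ l) (hm : 2^(2*l+1) - 1 ≤ m) (u : ℕ) :
    R (S0 l m 0) u = R (S0 l m 1) u := by
  have hb := bijOn_swap l m hl hm u
  rw [R_eq, R_eq, pairSet_S0, pairSet_S0,
    Set.ncard_image_of_injOn (injOn_val_pairs l m hl hm 0 u),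
    Set.ncard_image_of_injOn (injOn_val_pairs l m hl hm 1 u),
    ← hb.image_eq, Set.ncard_image_of_injOn hb.injOn]

lemma R_tr_add (t : ℕ) (S : Set ℕ) (u : ℕ) : R (tr t S) (2*t + u) = R S u := by
  have himg : pairSet (tr t S) (2*t + u)
      = (fun p : ℕ × ℕ => (t + p.1, t + p.2)) '' pairSet S u := by
    ext ⟨x, y⟩
    constructor
    · rintro ⟨⟨x0, hx0, rfl⟩, ⟨y0, hy0, rfl⟩, hlt, hsum⟩
      dsimp only at hlt hsum
      exact ⟨(x0, y0), ⟨hx0, hy0, by omega, by omega⟩, rfl⟩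
    · rintro ⟨⟨x0, y0⟩, ⟨hx0, hy0, hlt, hsum⟩, heq⟩
      dsimp only at heq hx0 hy0 hlt hsum
      rw [← heq]
      exact ⟨⟨x0, hx0, rfl⟩, ⟨y0, hy0, rfl⟩, by omega, by omega⟩
  rw [R_eq, R_eq, himg, Set.ncard_image_of_injOn]
  rintro ⟨x, y⟩ - ⟨x', y'⟩ - heq
  rw [Prod.mk.injEq] at heq
  dsimp only at heq
  rw [Prod.mk.injEq]
  omega

lemma R_tr_small (t : ℕ) (S : Set ℕ) (n : ℕ) (h : n < 2*t) : R (tr t S) n = 0 := by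
  rw [R_eq]
  convert Set.ncard_empty (ℕ × ℕ)
  rw [Set.eq_empty_iff_forall_notMem]
  rintro ⟨x, y⟩ ⟨⟨x0, -, rfl⟩, ⟨y0, -, rfl⟩, -, hsum⟩
  dsimp only at hsum
  omega

lemma S0_inter (l m : ℕ) (hl : 1 ≤ l) (hm : 2^(2*l+1) - 1 ≤ m) :
    S0 l m 0 ∩ S0 l m 1 = {v | ∃ k, v = (2^(2*l) - 1) + m * k} := by
  ext v
  constructor
  · rintro ⟨⟨F, hF, hFv⟩, ⟨G, hG, hGv⟩⟩
    have h := dichotomy l m hl hm (hFv.trans hGv.symm)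
    rcases h with h | ⟨-, k, hk⟩
    · rw [h, hG] at hF
      omega
    · exact ⟨k, by rw [← hFv, hk]⟩
  · rintro ⟨k, rfl⟩
    exact ⟨rep_both l m k 0 (by omega), rep_both l m k 1 (by omega)⟩

lemma notin_S1 (l m : ℕ) (hl : 1 ≤ l) (hm : 2^(2*l+1) - 1 ≤ m)
    {v : ℕ} (F : Finset ℕ) (hF : F.card % 2 = 0) (hv : val l m F = v)
    (hns : ∀ k, v ≠ (2^(2*l) - 1) + m * k) : v ∉ S0 l m 1 := by
  rintro ⟨G, hG, hGv⟩
  rcases dichotomy l m hl hm (hv.trans hGv.symm) with h | ⟨-, k, hk⟩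
  · rw [h, hG] at hF
    omega
  · exact hns k (by rw [← hv, hk])

lemma card_up_three (l j : ℕ) : (up l (3 * 4^j)).card = 2 := by
  classical
  have h3 : Nat.bitIndices 3 = [0, 1] := by
    rw [show (3:ℕ) = 2*1+1 by norm_num, Nat.bitIndices_two_mul_add_one,
      Nat.bitIndices_one]
    rfl
  have hb : Nat.bitIndices (3 * 4^j) = [2*j, 2*j+1] := by
    rw [show 3 * 4^j = 2^(2*j) * 3 by
        rw [show (4:ℕ) = 2^2 by norm_num, ← pow_mul]; ring,
      Nat.bitIndices_two_pow_mul, h3]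
    simp [Nat.add_comm]
  rw [up, hb]
  rw [Finset.card_image_of_injOn (by intro a _ b _ hab; simp only at hab; omega)]
  have : ([2*j, 2*j+1] : List ℕ).toFinset = {2*j, 2*j+1} := by simp
  rw [this, Finset.card_insert_of_notMem (by simp), Finset.card_singleton]

lemma m_mul_ne (l m : ℕ) (hl : 1 ≤ l) (hm : 2^(2*l+1) - 1 ≤ m) (K k : ℕ) :
    m * K ≠ (2^(2*l) - 1) + m * k := by
  obtain ⟨hp4, hp2, hsm, hm0⟩ := pow_facts l m hl hm
  intro he
  rcases le_or_gt K k with h | h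
  · have h1 : m * K ≤ m * k := Nat.mul_le_mul (le_refl m) h
    omega
  · have h1 : m * (k+1) ≤ m * K := Nat.mul_le_mul (le_refl m) h
    have h2 : m * (k+1) = m * k + m := by ring
    omega

end S17

theorem stmt_17 (l r m : ℕ) (hl : 1 ≤ l)
    (hr : 2 ^ (2 * l) - 1 ≤ r) (hm : 2 ^ (2 * l + 1) - 1 ≤ m) :
    ∃ A B : Set ℕ, R A = R B ∧ (symmDiff A B).Infinite ∧
      A ∩ B = {x : ℕ | ∃ k : ℕ, x = r + k * m} := by
  classical
  obtain ⟨hp4, hp2, hsm, hm0⟩ := S17.pow_facts l m hl hm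
  set t := r - (2^(2*l) - 1) with ht
  have hts : t + (2^(2*l) - 1) = r := by omega
  refine ⟨tr t (S17.S0 l m 0), tr t (S17.S0 l m 1), ?_, ?_, ?_⟩
  · funext n
    rcases le_or_gt (2*t) n with h | h
    · obtain ⟨u, rfl⟩ := Nat.exists_eq_add_of_le h
      rw [S17.R_tr_add, S17.R_tr_add, S17.R_S0_eq l m hl hm]
    · rw [S17.R_tr_small _ _ _ h, S17.R_tr_small _ _ _ h]
  · -- infinitude of the symmetric difference
    have hsub : tr t (S17.S0 l m 0) \ tr t (S17.S0 l m 1)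
        ⊆ symmDiff (tr t (S17.S0 l m 0)) (tr t (S17.S0 l m 1)) := by
      rw [Set.symmDiff_def]
      exact Set.subset_union_left
    refine Set.Infinite.mono hsub
      (Set.infinite_of_injective_forall_mem
        (f := fun j : ℕ => t + m * (3 * 4^j)) ?_ ?_)
    · intro a b hab
      by_contra hne
      wlog h : a < b generalizing a b
      · exact this hab.symm (Ne.symm hne) (by omega)
      have h4 : (4:ℕ)^a < 4^b := Nat.pow_lt_pow_right (by norm_num) h
      have h5 : 3 * 4^a < 3 * 4^b := by omega
      have h6 : m * (3 * 4^a) < m * (3 * 4^b) :=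
        mul_lt_mul_of_pos_left h5 hm0
      simp only at hab
      omega
    · intro j
      constructor
      · exact ⟨m * (3 * 4^j),
          ⟨S17.up l (3 * 4^j), by rw [S17.card_up_three], S17.val_up l m _⟩, rfl⟩
      · rintro ⟨v, hv, hveq⟩
        simp only at hveq
        have hveq' : v = m * (3 * 4^j) := by omega
        rw [hveq'] at hv
        exact S17.notin_S1 l m hl hm (S17.up l (3 * 4^j))
          (by rw [S17.card_up_three]) (S17.val_up l m _)
          (S17.m_mul_ne l m hl hm _) hv
  · -- the intersection
    have himg : tr t (S17.S0 l m 0) ∩ tr t (S17.S0 l m 1)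
        = (t + ·) '' (S17.S0 l m 0 ∩ S17.S0 l m 1) := by
      rw [tr, tr, Set.image_inter (fun a b hab => by omega)]
    rw [himg, S17.S0_inter l m hl hm]
    ext x
    constructor
    · rintro ⟨v, ⟨k, rfl⟩, rfl⟩
      refine ⟨k, ?_⟩
      dsimp only
      rw [Nat.mul_comm k m]
      omega
    · rintro ⟨k, rfl⟩
      refine ⟨(2^(2*l) - 1) + m * k, ⟨k, rfl⟩, ?_⟩
      dsimp only
      rw [Nat.mul_comm k m]
      omega
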